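/- In a right-angled Coxeter system, if u s v t w = u v w with u, v, w elements of W and s, t standard generators, and this arises from a reduced-expression cancellation (i.e. v^{-1} s v = t), then s = t and every generator appearing in a reduced expression of v commutes with s. -/

import Mathlib

open List

namespace RACC

open scoped Classical

variable {B : Type*} {W : Type*} [Group W] {M : CoxeterMatrix B} (cs : CoxeterSystem M W)

/-- One letter of the Tits sign representation. -/
noncomputable def sgn (a : B) : Function.End (W × ZMod 2) :=
  fun x => (cs.simple a * x.1 * cs.simple a, x.2 + if x.1 = cs.simple a then 1 else 0)

lemma zmod2_add_self : ∀ z : ZMod 2, z + z = 0 := by decide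

lemma sgn_mul_apply (a b : B) (w : W) (ε : ZMod 2) :
    (sgn cs a * sgn cs b) (w, ε) =
      ((cs.simple a * cs.simple b) * w * (cs.simple a * cs.simple b)⁻¹,
        ε + ((if w = cs.simple b then 1 else 0) +
          (if w = (cs.simple b * cs.simple a) * cs.simple b then 1 else 0))) := by
  show sgn cs a (sgn cs b (w, ε)) = _
  unfold sgn
  dsimp only
  congr 1
  · rw [mul_inv_rev, cs.inv_simple, cs.inv_simple]
    group
  · have : (cs.simple b * w * cs.simple b = cs.simple a)
        = (w = cs.simple b * cs.simple a * cs.simple b) := by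
      apply propext
      constructor
      · intro h
        have := congrArg (fun z => cs.simple b * z * cs.simple b) h
        rw [← mul_assoc, ← mul_assoc] at this
        rw [← this]
        simp [mul_assoc, cs.simple_mul_simple_cancel_left, cs.simple_mul_simple_cancel_right]
      · intro h
        rw [h]
        simp [mul_assoc, cs.simple_mul_simple_cancel_left, cs.simple_mul_simple_cancel_right]
    rw [this]
    ring

lemma sgn_pow_apply (a b : B) (j : ℕ) (w : W) (ε : ZMod 2) :
    ((sgn cs a * sgn cs b) ^ j) (w, ε) =
      ((cs.simple a * cs.simple b) ^ j * w * ((cs.simple a * cs.simple b) ^ j)⁻¹,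
        ε + ∑ l ∈ Finset.range (2 * j),
          (if w = (cs.simple b * cs.simple a) ^ l * cs.simple b then 1 else 0)) := by
  induction j generalizing w ε with
  | zero =>
    simp only [pow_zero, one_mul, inv_one, mul_one, Nat.mul_zero, Finset.range_zero,
      Finset.sum_empty, add_zero]
    rfl
  | succ j ih =>
    rw [pow_succ]
    show ((sgn cs a * sgn cs b) ^ j) ((sgn cs a * sgn cs b) (w, ε)) = _
    rw [sgn_mul_apply, ih]
    congr 1
    · rw [pow_succ]
      group
    · have key : ∀ l : ℕ,
          (cs.simple b * cs.simple a) * ((cs.simple b * cs.simple a) ^ l * cs.simple b) *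
            (cs.simple a * cs.simple b)
          = (cs.simple b * cs.simple a) ^ (l + 1 + 1) * cs.simple b := by
        intro l
        calc (cs.simple b * cs.simple a) * ((cs.simple b * cs.simple a) ^ l * cs.simple b) *
              (cs.simple a * cs.simple b)
            = ((cs.simple b * cs.simple a) * (cs.simple b * cs.simple a) ^ l) *
              ((cs.simple b * cs.simple a) * cs.simple b) := by group
          _ = (cs.simple b * cs.simple a) ^ (l + 1) *
              ((cs.simple b * cs.simple a) * cs.simple b) := by rw [← pow_succ']
          _ = ((cs.simple b * cs.simple a) ^ (l + 1) * (cs.simple b * cs.simple a)) *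
              cs.simple b := by group
          _ = (cs.simple b * cs.simple a) ^ (l + 1 + 1) * cs.simple b := by rw [← pow_succ]
      have hcond : ∀ l : ℕ,
          ((cs.simple a * cs.simple b) * w * (cs.simple a * cs.simple b)⁻¹
            = (cs.simple b * cs.simple a) ^ l * cs.simple b)
          = (w = (cs.simple b * cs.simple a) ^ (l + 1 + 1) * cs.simple b) := by
        intro l
        apply propext
        constructor
        · intro h
          have hw : w = (cs.simple b * cs.simple a) *
              ((cs.simple a * cs.simple b) * w * (cs.simple a * cs.simple b)⁻¹) *
              (cs.simple a * cs.simple b) := by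
            simp [mul_assoc, mul_inv_rev, cs.inv_simple, cs.simple_mul_simple_cancel_left,
              cs.simple_mul_simple_self]
          rw [h, key] at hw
          exact hw
        · intro h
          rw [h, ← key l]
          simp [mul_assoc, mul_inv_rev, cs.inv_simple, cs.simple_mul_simple_cancel_left,
            cs.simple_mul_simple_self]
      simp only [hcond]
      have hsum : ∀ (f : ℕ → ZMod 2) (n : ℕ),
          ∑ l ∈ Finset.range (n + 2), f l = f 0 + f 1 + ∑ l ∈ Finset.range n, f (l + 1 + 1) := by
        intro f n
        rw [Finset.sum_range_succ', Finset.sum_range_succ']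
        ring
      rw [show 2 * (j + 1) = 2 * j + 2 from by ring, hsum]
      simp only [pow_zero, one_mul, pow_one]
      ring

lemma sgn_liftable : CoxeterMatrix.IsLiftable M (fun a => sgn cs a) := by
  intro a b
  have hm := cs.simple_mul_simple_pow a b
  have hm' : (cs.simple b * cs.simple a) ^ M a b = 1 := by
    have : cs.simple b * cs.simple a = (cs.simple a * cs.simple b)⁻¹ := by
      rw [mul_inv_rev, cs.inv_simple, cs.inv_simple]
    rw [this, inv_pow, hm, inv_one]
  funext x
  obtain ⟨w, ε⟩ := x
  show ((sgn cs a * sgn cs b) ^ M a b) (w, ε) = (w, ε)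
  rw [sgn_pow_apply, hm]
  simp only [one_mul, inv_one, mul_one]
  congr 1
  rw [two_mul, Finset.sum_range_add]
  have : ∀ l ∈ Finset.range (M a b),
      (if w = (cs.simple b * cs.simple a) ^ (M a b + l) * cs.simple b then (1 : ZMod 2) else 0)
      = (if w = (cs.simple b * cs.simple a) ^ l * cs.simple b then 1 else 0) := by
    intro l _
    rw [pow_add, hm', one_mul]
  rw [Finset.sum_congr rfl this, zmod2_add_self, add_zero]

/-- The Tits sign representation. -/
noncomputable def sgnRep : W →* Function.End (W × ZMod 2) :=
  cs.lift ⟨fun a => sgn cs a, sgn_liftable cs⟩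

lemma sgnRep_simple (a : B) : sgnRep cs (cs.simple a) = sgn cs a :=
  cs.lift_apply_simple (sgn_liftable cs) a

/-- Parity of the number of occurrences of a reflection in inversion sequences. -/
noncomputable def nn (w t : W) : ZMod 2 := ((sgnRep cs w) (t, 0)).2

lemma sgnRep_apply (w x : W) (ε : ZMod 2) :
    (sgnRep cs w) (x, ε) = (w * x * w⁻¹, ε + nn cs w x) := by
  induction w using cs.simple_induction_left generalizing x ε with
  | one =>
    unfold nn
    rw [map_one]
    show (x, ε) = (1 * x * 1⁻¹, ε + ((x, (0 : ZMod 2))).2)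
    simp
  | mul_simple_left w i ih =>
    have happ : ∀ (x : W) (ε : ZMod 2), (sgnRep cs (cs.simple i * w)) (x, ε)
        = (sgn cs i) ((sgnRep cs w) (x, ε)) := by
      intro x ε
      rw [map_mul, sgnRep_simple]
      rfl
    have hn : nn cs (cs.simple i * w) x
        = nn cs w x + (if w * x * w⁻¹ = cs.simple i then 1 else 0) := by
      unfold nn
      rw [happ, ih]
      show (0 + nn cs w x) + _ = _
      rw [zero_add]
    rw [happ, ih]
    show (cs.simple i * (w * x * w⁻¹) * cs.simple i,
      (ε + nn cs w x) + if w * x * w⁻¹ = cs.simple i then 1 else 0) = _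
    rw [hn]
    congr 1
    · rw [mul_inv_rev, cs.inv_simple]
      group
    · ring

lemma nn_mul (x y t : W) : nn cs (x * y) t = nn cs y t + nn cs x (y * t * y⁻¹) := by
  unfold nn
  rw [map_mul]
  show ((sgnRep cs x) ((sgnRep cs y) (t, 0))).2 = _
  rw [sgnRep_apply, sgnRep_apply]
  dsimp only
  rw [zero_add]
  rfl

lemma nn_one (t : W) : nn cs 1 t = 0 := by
  unfold nn
  rw [map_one]
  rfl

lemma nn_simple (a : B) (x : W) :
    nn cs (cs.simple a) x = if x = cs.simple a then 1 else 0 := by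
  unfold nn
  rw [sgnRep_simple]
  show (0 : ZMod 2) + _ = _
  rw [zero_add]

lemma nn_inv (y t : W) : nn cs y⁻¹ t = nn cs y (y⁻¹ * t * y) := by
  have h := nn_mul cs y y⁻¹ t
  rw [mul_inv_cancel, nn_one] at h
  have h2 : y⁻¹ * t * y⁻¹⁻¹ = y⁻¹ * t * y := by rw [inv_inv]
  rw [h2] at h
  have := zmod2_add_self (nn cs y⁻¹ t)
  calc nn cs y⁻¹ t = nn cs y⁻¹ t + (nn cs y⁻¹ t + nn cs y (y⁻¹ * t * y)) := by
        rw [← h, add_zero]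
    _ = (nn cs y⁻¹ t + nn cs y⁻¹ t) + nn cs y (y⁻¹ * t * y) := by ring
    _ = nn cs y (y⁻¹ * t * y) := by rw [zmod2_add_self, zero_add]

lemma nn_refl_self {t : W} (ht : cs.IsReflection t) : nn cs t t = 1 := by
  obtain ⟨y, a, rfl⟩ := ht
  set t := y * cs.simple a * y⁻¹ with hht
  have hyt : y⁻¹ * t * y = cs.simple a := by
    rw [hht]
    simp [mul_assoc]
  have h1 : nn cs t t = nn cs (cs.simple a * y⁻¹) t + nn cs y ((cs.simple a * y⁻¹) * t * (cs.simple a * y⁻¹)⁻¹) := by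
    have : t = y * (cs.simple a * y⁻¹) := by rw [hht]; group
    nth_rw 1 [this]
    exact nn_mul cs y (cs.simple a * y⁻¹) t
  have h2 : (cs.simple a * y⁻¹) * t * (cs.simple a * y⁻¹)⁻¹ = cs.simple a := by
    rw [hht, mul_inv_rev, inv_inv, cs.inv_simple]
    simp [mul_assoc, cs.simple_mul_simple_cancel_left]
  have h3 : nn cs (cs.simple a * y⁻¹) t = nn cs y⁻¹ t + nn cs (cs.simple a) (y⁻¹ * t * y) := by
    have := nn_mul cs (cs.simple a) y⁻¹ t
    rw [inv_inv] at this
    exact this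
  rw [h2, h3, hyt, nn_simple, if_pos rfl, nn_inv, hyt] at h1
  rw [h1]
  calc nn cs y (cs.simple a) + 1 + nn cs y (cs.simple a)
      = (nn cs y (cs.simple a) + nn cs y (cs.simple a)) + 1 := by ring
    _ = 1 := by rw [zmod2_add_self, zero_add]

lemma nn_eq_zero_of_not_mem (ω : List B) (t : W) (h : t ∉ cs.rightInvSeq ω) :
    nn cs (cs.wordProd ω) t = 0 := by
  induction ω with
  | nil =>
    rw [cs.wordProd_nil]
    exact nn_one cs t
  | cons a ω' ih =>
    have hris : cs.rightInvSeq (a :: ω') =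
        ((cs.wordProd ω')⁻¹ * cs.simple a * cs.wordProd ω') :: cs.rightInvSeq ω' := rfl
    rw [hris, List.mem_cons] at h
    push_neg at h
    obtain ⟨h1, h2⟩ := h
    rw [cs.wordProd_cons, nn_mul, ih h2, nn_simple, zero_add, if_neg, ]
    intro hc
    apply h1
    rw [← hc]
    simp [mul_assoc]

lemma mem_rightInvSeq_of_isRightInversion {ω : List B} {t : W}
    (hinv : cs.IsRightInversion (cs.wordProd ω) t) : t ∈ cs.rightInvSeq ω := by
  by_contra hmem
  have h0 : nn cs (cs.wordProd ω) t = 0 := nn_eq_zero_of_not_mem cs ω t hmem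
  set w := cs.wordProd ω
  have h1 : nn cs (w * t) t = 1 := by
    have htt : t * t * t⁻¹ = t := by
      rw [hinv.1.mul_self, one_mul]
      exact hinv.1.inv
    rw [nn_mul, htt, h0, add_zero, nn_refl_self cs hinv.1]
  obtain ⟨ξ, hred, hξ⟩ := cs.exists_reduced_word' (w * t)
  have hmem2 : t ∈ cs.rightInvSeq ξ := by
    by_contra hm2
    have hz := nn_eq_zero_of_not_mem cs ξ t hm2
    rw [← hξ, h1] at hz
    exact (by decide : ((1 : ZMod 2) ≠ 0)) hz
  have hinv2 := cs.isRightInversion_of_mem_rightInvSeq hred hmem2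
  have h3 : cs.length (cs.wordProd ξ * t) < cs.length (cs.wordProd ξ) := hinv2.2
  rw [← hξ] at h3
  have h4 : w * t * t = w := by rw [mul_assoc, hinv.1.mul_self, mul_one]
  rw [h4] at h3
  have h5 := hinv.2
  omega

lemma mem_leftInvSeq_of_isLeftInversion {ω : List B} {t : W}
    (hinv : cs.IsLeftInversion (cs.wordProd ω) t) : t ∈ cs.leftInvSeq ω := by
  have hrev : cs.wordProd ω.reverse = (cs.wordProd ω)⁻¹ := cs.wordProd_reverse ω
  have hr : cs.IsRightInversion (cs.wordProd ω.reverse) t := by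
    constructor
    · exact hinv.1
    · rw [hrev]
      have hinvlen : cs.length ((cs.wordProd ω)⁻¹ * t) = cs.length (t * cs.wordProd ω) := by
        rw [← cs.length_inv]
        congr 1
        rw [mul_inv_rev, inv_inv, hinv.1.inv]
      rw [hinvlen, cs.length_inv]
      exact hinv.2
  have := mem_rightInvSeq_of_isRightInversion cs hr
  rw [cs.rightInvSeq_reverse] at this
  rw [List.mem_reverse] at this
  exact this

section Abelianization

lemma idx (hra : ∀ b c : B, b ≠ c → M b c = 2 ∨ M b c = 0) {w : W} {b c : B}
    (h : w * cs.simple b * w⁻¹ = cs.simple c) : b = c := by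
  have hlift : CoxeterMatrix.IsLiftable M
      (fun d => Multiplicative.ofAdd (Pi.single d (1 : ZMod 2) : B → ZMod 2)) := by
    intro d e
    have hmul : (Multiplicative.ofAdd (Pi.single d (1 : ZMod 2) : B → ZMod 2)) *
        (Multiplicative.ofAdd (Pi.single e (1 : ZMod 2) : B → ZMod 2))
        = Multiplicative.ofAdd ((Pi.single d (1 : ZMod 2) : B → ZMod 2) + Pi.single e 1) := by
      rw [ofAdd_add]
    have hzero : ∀ (v : B → ZMod 2), (Multiplicative.ofAdd v) ^ 2 = 1 := by
      intro v
      have hvv : v + v = 0 := by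
        funext q
        exact zmod2_add_self (v q)
      rw [pow_two, ← ofAdd_add, hvv]
      rfl
    by_cases hde : d = e
    · subst hde
      rw [M.diagonal d, pow_one, hmul]
      have : (Pi.single d (1 : ZMod 2) : B → ZMod 2) + Pi.single d 1 = 0 := by
        funext q
        exact zmod2_add_self _
      rw [this]
      rfl
    · rcases hra d e hde with h2 | h0
      · rw [h2, hmul, ← pow_one (Multiplicative.ofAdd _)]
        rw [← pow_mul]
        rw [one_mul]
        exact hzero _
      · rw [h0, pow_zero]
  set f := cs.lift ⟨fun d => Multiplicative.ofAdd (Pi.single d (1 : ZMod 2) : B → ZMod 2), hlift⟩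
  have hfsimple : ∀ d : B, f (cs.simple d)
      = Multiplicative.ofAdd (Pi.single d (1 : ZMod 2) : B → ZMod 2) :=
    fun d => cs.lift_apply_simple hlift d
  have heq : f (cs.simple b) = f (cs.simple c) := by
    have := congrArg f h
    rw [map_mul, map_mul, map_inv] at this
    rw [← this, mul_comm (f w) (f (cs.simple b)), mul_assoc, mul_inv_cancel, mul_one]
  rw [hfsimple, hfsimple] at heq
  have heq2 : (Pi.single b (1 : ZMod 2) : B → ZMod 2) = Pi.single c 1 :=
    Multiplicative.ofAdd.injective heq
  by_contra hbc
  have := congrFun heq2 b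
  rw [Pi.single_eq_same, Pi.single_eq_of_ne hbc] at this
  exact one_ne_zero this

end Abelianization

lemma comm_of_two {b c : B} (h : M b c = 2) :
    cs.simple b * cs.simple c = cs.simple c * cs.simple b := by
  have hp := cs.simple_mul_simple_pow b c
  rw [h, pow_two] at hp
  have := mul_eq_one_iff_eq_inv.mp hp
  rw [mul_inv_rev, cs.inv_simple, cs.inv_simple] at this
  exact this

section Jwords

/-- Words in the two letters `i`, `a`. -/
def Jw (i a : B) (ρ : List B) : Prop := ∀ b ∈ ρ, b = i ∨ b = a

lemma jw_pi_mem {i a : B} {ρ : List B} (h : Jw i a ρ) :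
    cs.wordProd ρ ∈ Subgroup.closure {cs.simple i, cs.simple a} := by
  induction ρ with
  | nil =>
    rw [cs.wordProd_nil]
    exact one_mem _
  | cons b ρ' ih =>
    rw [cs.wordProd_cons]
    apply mul_mem
    · apply Subgroup.subset_closure
      rcases h b (List.mem_cons_self) with hb | hb <;> rw [hb]
      · exact Set.mem_insert _ _
      · exact Set.mem_insert_of_mem _ rfl
    · exact ih (fun x hx => h x (List.mem_cons_of_mem b hx))

lemma exists_jword {i a : B} {y : W} (hy : y ∈ Subgroup.closure {cs.simple i, cs.simple a}) :
    ∃ ρ, Jw i a ρ ∧ cs.wordProd ρ = y := by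
  induction hy using Subgroup.closure_induction with
  | mem x hx =>
    rcases hx with hx | hx
    · exact ⟨[i], fun b hb => Or.inl (List.mem_singleton.mp hb), by rw [cs.wordProd_singleton, hx]⟩
    · exact ⟨[a], fun b hb => Or.inr (List.mem_singleton.mp hb),
        by rw [cs.wordProd_singleton, hx]⟩
  | one => exact ⟨[], fun b hb => absurd hb (List.not_mem_nil), cs.wordProd_nil⟩
  | mul x y _ _ ihx ihy =>
    obtain ⟨ρ₁, hJ1, hπ1⟩ := ihx
    obtain ⟨ρ₂, hJ2, hπ2⟩ := ihy
    exact ⟨ρ₁ ++ ρ₂, fun b hb => (List.mem_append.mp hb).elim (hJ1 b) (hJ2 b),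
      by rw [cs.wordProd_append, hπ1, hπ2]⟩
  | inv x _ ihx =>
    obtain ⟨ρ₁, hJ1, hπ1⟩ := ihx
    exact ⟨ρ₁.reverse, fun b hb => hJ1 b (List.mem_reverse.mp hb),
      by rw [cs.wordProd_reverse, hπ1]⟩

lemma jword_min_mul (i a : B) (x : W)
    (hx : ∀ z ∈ Subgroup.closure {cs.simple i, cs.simple a},
      cs.length x ≤ cs.length (z * x)) :
    ∀ (n : ℕ) (ρ : List B), ρ.length = n → Jw i a ρ →
      (∀ ρ', Jw i a ρ' → cs.wordProd ρ' = cs.wordProd ρ → ρ.length ≤ ρ'.length) →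
      cs.length (cs.wordProd ρ * x) = ρ.length + cs.length x := by
  intro n
  induction n using Nat.strong_induction_on with
  | _ n ih =>
    intro ρ hlen hJ hmin
    cases ρ with
    | nil => simp [cs.wordProd_nil]
    | cons c ρ₁ =>
      have hJ₁ : Jw i a ρ₁ := fun b hb => hJ b (List.mem_cons_of_mem c hb)
      have hmin₁ : ∀ ρ', Jw i a ρ' → cs.wordProd ρ' = cs.wordProd ρ₁ →
          ρ₁.length ≤ ρ'.length := by
        intro ρ' hJ' hπ'
        have hJc : Jw i a (c :: ρ') := by
          intro b hb
          rcases List.mem_cons.mp hb with hb | hb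
          · exact hJ b (hb ▸ List.mem_cons_self)
          · exact hJ' b hb
        have := hmin (c :: ρ') hJc (by rw [cs.wordProd_cons, hπ', ← cs.wordProd_cons])
        simp only [List.length_cons] at this
        omega
      have hlt : ρ₁.length < n := by
        simp only [List.length_cons] at hlen
        omega
      have ih₁ := ih ρ₁.length hlt ρ₁ rfl hJ₁ hmin₁
      obtain ⟨ρx, hxred, hxw⟩ := cs.exists_reduced_word' x
      have hlenx : ρx.length = cs.length x := by
        have := hxred
        unfold CoxeterSystem.IsReduced at this
        rw [← hxw] at this
        omega
      have hWprod : cs.wordProd (ρ₁ ++ ρx) = cs.wordProd ρ₁ * x := by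
        rw [cs.wordProd_append, ← hxw]
      rcases cs.length_simple_mul (cs.wordProd ρ₁ * x) c with hup | hdown
      · rw [cs.wordProd_cons, mul_assoc, hup, ih₁]
        simp only [List.length_cons]
        omega
      · exfalso
        have hinv : cs.IsLeftInversion (cs.wordProd (ρ₁ ++ ρx)) (cs.simple c) := by
          constructor
          · exact cs.isReflection_simple c
          · rw [hWprod]
            omega
        have hmem := mem_leftInvSeq_of_isLeftInversion cs hinv
        obtain ⟨l, hl, hget⟩ := List.mem_iff_getElem.mp hmem
        have hl' : l < (ρ₁ ++ ρx).length := by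
          rw [← cs.length_leftInvSeq (ρ₁ ++ ρx)]
          exact hl
        have hgetD : (cs.leftInvSeq (ρ₁ ++ ρx)).getD l 1 = cs.simple c := by
          rw [List.getD_eq_getElem _ _ hl, hget]
        have heq : cs.simple c * (cs.wordProd ρ₁ * x) = cs.wordProd ((ρ₁ ++ ρx).eraseIdx l) := by
          rw [← hWprod, ← hgetD]
          exact cs.getD_leftInvSeq_mul_wordProd _ l
        by_cases hcase : l < ρ₁.length
        · rw [List.eraseIdx_append_of_lt_length hcase, cs.wordProd_append, ← hxw] at heq
          have heq2 : cs.simple c * cs.wordProd ρ₁ = cs.wordProd (ρ₁.eraseIdx l) := by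
            rw [← mul_assoc] at heq
            exact mul_right_cancel heq
          have hJe : Jw i a (ρ₁.eraseIdx l) :=
            fun b hb => hJ₁ b (List.eraseIdx_subset hb)
          have hminc := hmin (ρ₁.eraseIdx l) hJe (by rw [← heq2, ← cs.wordProd_cons])
          have hlen2 : (ρ₁.eraseIdx l).length + 1 = ρ₁.length :=
            List.length_eraseIdx_add_one hcase
          simp only [List.length_cons] at hminc
          omega
        · push_neg at hcase
          rw [List.eraseIdx_append_of_length_le hcase, cs.wordProd_append] at heq
          set l' := l - ρ₁.length with hl'def
          have hl'lt : l' < ρx.length := by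
            rw [List.length_append] at hl'
            omega
          set z := (cs.wordProd ρ₁)⁻¹ * cs.simple c * cs.wordProd ρ₁ with hzdef
          have hcmem : cs.simple c ∈ ({cs.simple i, cs.simple a} : Set W) := by
            rcases hJ c (List.mem_cons_self) with hc | hc <;> rw [hc]
            · exact Set.mem_insert _ _
            · exact Set.mem_insert_of_mem _ rfl
          have hz : z ∈ Subgroup.closure {cs.simple i, cs.simple a} := by
            apply mul_mem (mul_mem (inv_mem (jw_pi_mem cs hJ₁))
              (Subgroup.subset_closure hcmem)) (jw_pi_mem cs hJ₁)
          have hzx : z * x = cs.wordProd (ρx.eraseIdx l') := by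
            rw [hzdef]
            calc (cs.wordProd ρ₁)⁻¹ * cs.simple c * cs.wordProd ρ₁ * x
                = (cs.wordProd ρ₁)⁻¹ * (cs.simple c * (cs.wordProd ρ₁ * x)) := by group
              _ = (cs.wordProd ρ₁)⁻¹ * (cs.wordProd ρ₁ * cs.wordProd (ρx.eraseIdx l')) := by
                  rw [heq]
              _ = cs.wordProd (ρx.eraseIdx l') := by group
          have hlen3 : (ρx.eraseIdx l').length + 1 = ρx.length :=
            List.length_eraseIdx_add_one hl'lt
          have hlen4 : cs.length (z * x) ≤ (ρx.eraseIdx l').length := by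
            rw [hzx]
            exact cs.length_wordProd_le _
          have := hx z hz
          omega

lemma min_chain (i a : B) : ∀ (ρ : List B), Jw i a ρ →
    (∀ ρ', Jw i a ρ' → cs.wordProd ρ' = cs.wordProd ρ → ρ.length ≤ ρ'.length) →
    ρ.Chain' (· ≠ ·) := by
  intro ρ
  induction ρ with
  | nil => intro _ _; exact List.isChain_nil
  | cons c ρ₁ ih =>
    intro hJ hmin
    cases ρ₁ with
    | nil => exact List.isChain_singleton c
    | cons c₂ ρ₂ =>
      simp only [List.Chain', List.isChain_cons_cons]
      constructor
      · rintro rfl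
        have heq : cs.wordProd ρ₂ = cs.wordProd (c :: c :: ρ₂) := by
          rw [cs.wordProd_cons, cs.wordProd_cons, cs.simple_mul_simple_cancel_left]
        have := hmin ρ₂ (fun b hb => hJ b (by simp [hb])) heq
        simp only [List.length_cons] at this
        omega
      · apply ih (fun b hb => hJ b (List.mem_cons_of_mem c hb))
        intro ρ' hJ' hπ'
        have hJc : Jw i a (c :: ρ') := by
          intro b hb
          rcases List.mem_cons.mp hb with hb | hb
          · exact hJ b (hb ▸ List.mem_cons_self)
          · exact hJ' b hb
        have := hmin (c :: ρ') hJc (by rw [cs.wordProd_cons, hπ', ← cs.wordProd_cons])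
        simp only [List.length_cons] at this ⊢
        omega


end Jwords

section Dihedral

/-- Two involutions of `ℤ` generating an infinite dihedral group. -/
noncomputable def f3 (i a : B) : B → Function.End ℤ :=
  fun b => if b = i then (fun x => -x) else if b = a then (fun x => 2 - x) else 1

lemma f3_sq (i a : B) (b : B) : (f3 i a b) * (f3 i a b) = 1 := by
  unfold f3
  split_ifs with h1 h2
  · erw [if_pos h1]
    funext x
    show -(-x) = x
    ring
  · erw [if_neg h1]
    split_ifs with h2
    · erw [if_pos h2]
      funext x
      show 2 - (2 - x) = x
      ring
    · erw [if_neg h2]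
      rfl

lemma f3_liftable (i a : B) (hra : ∀ b c : B, b ≠ c → M.M b c = 2 ∨ M.M b c = 0)
    (h0 : M.M i a = 0) : CoxeterMatrix.IsLiftable M (f3 i a) := by
  intro b c
  by_cases hbc0 : M.M b c = 0
  · rw [hbc0, pow_zero]
  · by_cases hbceq : b = c
    · subst hbceq
      rw [M.diagonal b, pow_one]
      exact f3_sq i a b
    · have h2 : M.M b c = 2 := (hra b c hbceq).resolve_right hbc0
      rw [h2, pow_two]
      have hone : f3 i a b = 1 ∨ f3 i a c = 1 := by
        by_cases hbi : b = i
        · right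
          have hci : c ≠ i := fun h => hbceq (hbi.trans h.symm)
          have hca : c ≠ a := by
            rintro rfl
            rw [hbi] at hbc0
            exact hbc0 h0
          unfold f3
          erw [if_neg hci, if_neg hca]
        · by_cases hba : b = a
          · right
            have hca : c ≠ a := fun h => hbceq (hba.trans h.symm)
            have hci : c ≠ i := by
              rintro rfl
              rw [hba] at hbc0
              apply hbc0
              rw [M.symmetric a c]
              exact h0
            unfold f3
            erw [if_neg hci, if_neg hca]
          · left
            unfold f3
            erw [if_neg hbi, if_neg hba]
      rcases hone with h1 | h1 <;> rw [h1]
      · rw [one_mul]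
        exact f3_sq i a c
      · rw [mul_one]
        exact f3_sq i a b

/-- Homomorphism to the infinite dihedral group acting on `ℤ`. -/
noncomputable def phi3 (i a : B) (hra : ∀ b c : B, b ≠ c → M.M b c = 2 ∨ M.M b c = 0)
    (h0 : M.M i a = 0) : W →* Function.End ℤ :=
  cs.lift ⟨f3 i a, f3_liftable i a hra h0⟩

lemma phi3_simple (i a : B) (hra : ∀ b c : B, b ≠ c → M.M b c = 2 ∨ M.M b c = 0)
    (h0 : M.M i a = 0) (b : B) :
    phi3 cs i a hra h0 (cs.simple b) = f3 i a b :=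
  cs.lift_apply_simple (f3_liftable i a hra h0) b

lemma aval (i a : B) (hra : ∀ b c : B, b ≠ c → M.M b c = 2 ∨ M.M b c = 0)
    (h0 : M.M i a = 0) (hia : i ≠ a) :
    ∀ (ρ : List B) (c : B) (rest : List B), ρ = c :: rest → Jw i a ρ →
      ρ.Chain' (· ≠ ·) →
      (phi3 cs i a hra h0 (cs.wordProd ρ)) 0 =
        (if c = i then -(2 * ((ρ.length / 2 : ℕ) : ℤ))
          else 2 * ((((ρ.length + 1) / 2 : ℕ) : ℤ))) := by
  intro ρ
  induction ρ with
  | nil =>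
    intro c rest h
    simp at h
  | cons c' rest' ih =>
    intro c rest heq hJ hC
    have hc' : c' = c := by injection heq
    subst hc'
    cases rest' with
    | nil =>
      rw [cs.wordProd_singleton, phi3_simple]
      rcases hJ c' (List.mem_cons_self) with hci | hca
      · rw [if_pos hci]
        unfold f3
        erw [if_pos hci]
        norm_num
      · have hcni : c' ≠ i := by
          rw [hca]
          exact fun h => hia h.symm
        rw [if_neg hcni]
        unfold f3
        erw [if_neg hcni, if_pos hca]
        norm_num
    | cons c₂ rest₂ =>
      have hCp := List.isChain_cons_cons.mp hC
      have hne : c' ≠ c₂ := hCp.1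
      have hJt : Jw i a (c₂ :: rest₂) :=
        fun b hb => hJ b (List.mem_cons_of_mem c' hb)
      have hval := ih c₂ rest₂ rfl hJt hCp.2
      rw [cs.wordProd_cons, map_mul]
      show (phi3 cs i a hra h0 (cs.simple c'))
        ((phi3 cs i a hra h0 (cs.wordProd (c₂ :: rest₂))) 0) = _
      rw [hval, phi3_simple]
      rcases hJ c' (List.mem_cons_self) with hci | hca
      · -- c' = i, so c₂ = a
        have hc₂ : c₂ = a := by
          rcases hJt c₂ (List.mem_cons_self) with h | h
          · exact absurd (hci.trans h.symm) hne
          · exact h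
        have hc₂ni : c₂ ≠ i := by
          rw [hc₂]
          exact fun h => hia h.symm
        rw [if_neg hc₂ni, if_pos hci]
        unfold f3
        erw [if_pos hci]
        show -(2 * ((((c₂ :: rest₂).length + 1) / 2 : ℕ) : ℤ)) = _
        simp only [List.length_cons]
      · -- c' = a, c₂ = i
        have hcni : c' ≠ i := by
          rw [hca]
          exact fun h => hia h.symm
        have hc₂ : c₂ = i := by
          rcases hJt c₂ (List.mem_cons_self) with h | h
          · exact h
          · exact absurd (hca.trans h.symm) hne
        rw [if_pos hc₂, if_neg hcni]
        unfold f3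
        erw [if_neg hcni, if_pos hca]
        show 2 - (-(2 * (((c₂ :: rest₂).length / 2 : ℕ) : ℤ))) = _
        simp only [List.length_cons]
        have harith : (rest₂.length + 1 + 1 + 1) / 2 = (rest₂.length + 1) / 2 + 1 := by
          omega
        rw [harith]
        push_cast
        ring

end Dihedral

lemma length_parity_word (ρ : List B) :
    cs.lengthParity (cs.wordProd ρ) = Multiplicative.ofAdd ((ρ.length : ZMod 2)) := by
  induction ρ with
  | nil =>
    rw [cs.wordProd_nil, map_one]
    simp
  | cons b ρ' ih =>
    rw [cs.wordProd_cons, map_mul, cs.lengthParity_simple, ih, ← ofAdd_add]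
    congr 1
    simp only [List.length_cons]
    push_cast
    ring

lemma dih0 (hra : ∀ b c : B, b ≠ c → M.M b c = 2 ∨ M.M b c = 0) {i a : B} (hia : i ≠ a)
    (h0 : M.M i a = 0) (u : W)
    (hi : cs.length (cs.simple i * u) < cs.length u)
    (ha : cs.length (cs.simple a * u) < cs.length u) : False := by
  have himem : cs.simple i ∈ ({cs.simple i, cs.simple a} : Set W) := Set.mem_insert _ _
  have hamem : cs.simple a ∈ ({cs.simple i, cs.simple a} : Set W) :=
    Set.mem_insert_of_mem _ rfl
  -- minimal length coset representative
  have hex : ∃ n : ℕ, ∃ z, z ∈ Subgroup.closure {cs.simple i, cs.simple a} ∧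
      cs.length (z * u) = n := ⟨cs.length u, 1, one_mem _, by rw [one_mul]⟩
  obtain ⟨z₀, hz₀G, hz₀len⟩ := Nat.find_spec hex
  set x := z₀ * u with hxdef
  have hminx : ∀ z ∈ Subgroup.closure {cs.simple i, cs.simple a},
      cs.length x ≤ cs.length (z * x) := by
    intro z hz
    have h1 : Nat.find hex ≤ cs.length ((z * z₀) * u) :=
      Nat.find_min' hex ⟨z * z₀, mul_mem hz hz₀G, rfl⟩
    rw [mul_assoc] at h1
    rw [← hxdef] at h1
    omega
  set d := z₀⁻¹ with hd
  have hdG : d ∈ Subgroup.closure {cs.simple i, cs.simple a} := inv_mem hz₀G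
  have hu : u = d * x := by
    rw [hd, hxdef]
    group
  -- minimal J-words
  have minword : ∀ y : W, y ∈ Subgroup.closure {cs.simple i, cs.simple a} →
      ∃ ρ : List B, Jw i a ρ ∧ cs.wordProd ρ = y ∧
        (∀ ρ', Jw i a ρ' → cs.wordProd ρ' = y → ρ.length ≤ ρ'.length) := by
    intro y hy
    have hex2 : ∃ n, ∃ ρ : List B, Jw i a ρ ∧ cs.wordProd ρ = y ∧ ρ.length = n := by
      obtain ⟨ρ, h1, h2⟩ := exists_jword cs hy
      exact ⟨ρ.length, ρ, h1, h2, rfl⟩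
    obtain ⟨ρ, h1, h2, h3⟩ := Nat.find_spec hex2
    refine ⟨ρ, h1, h2, fun ρ' hJ' hπ' => ?_⟩
    rw [h3]
    exact Nat.find_min' hex2 ⟨ρ', hJ', hπ', rfl⟩
  obtain ⟨ρd, hJd, hπd, hmind⟩ := minword d hdG
  obtain ⟨ρi, hJi, hπi, hmini⟩ := minword (cs.simple i * d)
    (mul_mem (Subgroup.subset_closure himem) hdG)
  obtain ⟨ρa, hJa, hπa, hmina⟩ := minword (cs.simple a * d)
    (mul_mem (Subgroup.subset_closure hamem) hdG)
  -- lengths of the three elements times x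
  have hlu : cs.length u = ρd.length + cs.length x := by
    conv_lhs => rw [hu, ← hπd]
    exact jword_min_mul cs i a x hminx ρd.length ρd rfl hJd
      (fun ρ' hJ' hπ' => hmind ρ' hJ' (hπ'.trans hπd))
  have hli : cs.length (cs.simple i * u) = ρi.length + cs.length x := by
    conv_lhs => rw [hu, ← mul_assoc, ← hπi]
    exact jword_min_mul cs i a x hminx ρi.length ρi rfl hJi
      (fun ρ' hJ' hπ' => hmini ρ' hJ' (hπ'.trans hπi))
  have hla : cs.length (cs.simple a * u) = ρa.length + cs.length x := by
    conv_lhs => rw [hu, ← mul_assoc, ← hπa]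
    exact jword_min_mul cs i a x hminx ρa.length ρa rfl hJa
      (fun ρ' hJ' hπ' => hmina ρ' hJ' (hπ'.trans hπa))
  have hni : ρi.length < ρd.length := by omega
  have hna : ρa.length < ρd.length := by omega
  -- parity relations
  have hpar : ∀ (b : B) (ρ : List B), cs.wordProd ρ = cs.simple b * d →
      ρ.length % 2 = (ρd.length + 1) % 2 := by
    intro b ρ hπ
    have h1 := length_parity_word cs ρ
    have h2 := length_parity_word cs ρd
    have h3 : cs.lengthParity (cs.wordProd ρ)
        = cs.lengthParity (cs.simple b) * cs.lengthParity (cs.wordProd ρd) := by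
      rw [hπ, hπd, map_mul]
    rw [h1, h2, cs.lengthParity_simple, ← ofAdd_add] at h3
    have h4 : (ρ.length : ZMod 2) = ((ρd.length + 1 : ℕ) : ZMod 2) := by
      have := Multiplicative.ofAdd.injective h3
      rw [this]
      push_cast
      ring
    exact (ZMod.natCast_eq_natCast_iff' _ _ _).mp h4
  have hpari : ρi.length % 2 = (ρd.length + 1) % 2 := hpar i ρi hπi
  have hpara : ρa.length % 2 = (ρd.length + 1) % 2 := hpar a ρa hπa
  -- ρd is nonempty and alternating
  have hChd : ρd.Chain' (· ≠ ·) :=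
    min_chain cs i a ρd hJd (fun ρ' hJ' hπ' => hmind ρ' hJ' (hπ'.trans hπd))
  cases hρd : ρd with
  | nil =>
    rw [hρd] at hni
    simp at hni
  | cons c rest =>
    have hcmem : c = i ∨ c = a := hJd c (by rw [hρd]; exact List.mem_cons_self)
    -- helper to finish each side
    rcases hcmem with hc | hc
    · -- first letter is i : compare (a :: ρd) with ρa
      have hChain : (a :: ρd).Chain' (· ≠ ·) := by
        rw [hρd]
        simp only [List.Chain', List.isChain_cons_cons]
        refine ⟨?_, by rw [← hρd]; exact hChd⟩
        rw [hc]
        exact fun h => hia h.symm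
      have hJA : Jw i a (a :: ρd) := by
        intro b hb
        rcases List.mem_cons.mp hb with hb | hb
        · exact Or.inr hb
        · exact hJd b hb
      have hπA : cs.wordProd (a :: ρd) = cs.simple a * d := by
        rw [cs.wordProd_cons, hπd]
      have hv1 := aval cs i a hra h0 hia (a :: ρd) a ρd rfl hJA hChain
      have hani : a ≠ i := fun h => hia h.symm
      rw [if_neg hani] at hv1
      cases hρa : ρa with
      | nil =>
        -- then s a * d = 1, d = s a
        rw [hρa] at hπa
        rw [cs.wordProd_nil] at hπa
        have hd2 : d = cs.simple a := by
          have := congrArg (fun z => cs.simple a * z) hπa.symm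
          rw [← mul_assoc, cs.simple_mul_simple_self, one_mul, mul_one] at this
          exact this
        have hb1 : ρd.length ≤ 1 := by
          have := hmind [a] (fun b hb => Or.inr (List.mem_singleton.mp hb))
            (by rw [cs.wordProd_singleton, hd2])
          simpa using this
        have hrest : rest = [] := by
          rw [hρd] at hb1
          simp at hb1
          exact hb1
        have hds : cs.simple i = cs.simple a := by
          have hwd : cs.wordProd ρd = cs.simple c := by
            rw [hρd, hrest, cs.wordProd_singleton]
          rw [hwd, hc] at hπd
          exact hπd.trans hd2
        have : i = a := by
          apply idx cs hra (w := 1)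
          rw [one_mul, inv_one, mul_one]
          exact hds
        exact hia this
      | cons ca resta =>
        have hCha : ρa.Chain' (· ≠ ·) :=
          min_chain cs i a ρa hJa (fun ρ' hJ' hπ' => hmina ρ' hJ' (hπ'.trans hπa))
        rw [hρa] at hCha
        have hJa' := hρa ▸ hJa
        have hv2 := aval cs i a hra h0 hia (ca :: resta) ca resta rfl hJa' hCha
        have hvals : (phi3 cs i a hra h0 (cs.wordProd (a :: ρd))) 0
            = (phi3 cs i a hra h0 (cs.wordProd (ca :: resta))) 0 := by
          rw [hπA, ← hρa, hπa]
        rw [hv1, hv2] at hvals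
        have hlen_a : ρa.length = (ca :: resta).length := by rw [hρa]
        have hlen_d1 : (a :: ρd).length = ρd.length + 1 := by simp
        rcases hJa' ca (List.mem_cons_self) with hcai | hcaa
        · rw [if_pos hcai] at hvals
          rw [hlen_d1] at hvals
          omega
        · have hcani : ca ≠ i := by
            rw [hcaa]
            exact fun h => hia h.symm
          rw [if_neg hcani] at hvals
          rw [hlen_d1] at hvals
          omega
    · -- first letter is a : compare (i :: ρd) with ρi
      have hChain : (i :: ρd).Chain' (· ≠ ·) := by
        rw [hρd]
        simp only [List.Chain', List.isChain_cons_cons]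
        refine ⟨?_, by rw [← hρd]; exact hChd⟩
        rw [hc]
        exact hia
      have hJA : Jw i a (i :: ρd) := by
        intro b hb
        rcases List.mem_cons.mp hb with hb | hb
        · exact Or.inl hb
        · exact hJd b hb
      have hπA : cs.wordProd (i :: ρd) = cs.simple i * d := by
        rw [cs.wordProd_cons, hπd]
      have hv1 := aval cs i a hra h0 hia (i :: ρd) i ρd rfl hJA hChain
      rw [if_pos rfl] at hv1
      cases hρi : ρi with
      | nil =>
        rw [hρi] at hπi
        rw [cs.wordProd_nil] at hπi
        have hd2 : d = cs.simple i := by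
          have := congrArg (fun z => cs.simple i * z) hπi.symm
          rw [← mul_assoc, cs.simple_mul_simple_self, one_mul, mul_one] at this
          exact this
        have hb1 : ρd.length ≤ 1 := by
          have := hmind [i] (fun b hb => Or.inl (List.mem_singleton.mp hb))
            (by rw [cs.wordProd_singleton, hd2])
          simpa using this
        have hrest : rest = [] := by
          rw [hρd] at hb1
          simp at hb1
          exact hb1
        have hds : cs.simple a = cs.simple i := by
          have hwd : cs.wordProd ρd = cs.simple c := by
            rw [hρd, hrest, cs.wordProd_singleton]
          rw [hwd, hc] at hπd
          exact hπd.trans hd2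
        have : a = i := by
          apply idx cs hra (w := 1)
          rw [one_mul, inv_one, mul_one]
          exact hds
        exact hia this.symm
      | cons ci resti =>
        have hChi : ρi.Chain' (· ≠ ·) :=
          min_chain cs i a ρi hJi (fun ρ' hJ' hπ' => hmini ρ' hJ' (hπ'.trans hπi))
        rw [hρi] at hChi
        have hJi' := hρi ▸ hJi
        have hv2 := aval cs i a hra h0 hia (ci :: resti) ci resti rfl hJi' hChi
        have hvals : (phi3 cs i a hra h0 (cs.wordProd (i :: ρd))) 0
            = (phi3 cs i a hra h0 (cs.wordProd (ci :: resti))) 0 := by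
          rw [hπA, ← hρi, hπi]
        rw [hv1, hv2] at hvals
        have hlen_i : ρi.length = (ci :: resti).length := by rw [hρi]
        have hlen_d1 : (i :: ρd).length = ρd.length + 1 := by simp
        rcases hJi' ci (List.mem_cons_self) with hcii | hcia
        · rw [if_pos hcii] at hvals
          rw [hlen_d1] at hvals
          omega
        · have hcini : ci ≠ i := by
            rw [hcia]
            exact fun h => hia h.symm
          rw [if_neg hcini] at hvals
          rw [hlen_d1] at hvals
          omega

lemma comm_letters (hra : ∀ b c : B, b ≠ c → M.M b c = 2 ∨ M.M b c = 0) (i : B) :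
    ∀ (n : ℕ) (ω : List B), ω.length = n → cs.IsReduced ω →
      cs.simple i * cs.wordProd ω = cs.wordProd ω * cs.simple i →
      ∀ k ∈ ω, cs.simple k * cs.simple i = cs.simple i * cs.simple k := by
  intro n
  induction n using Nat.strong_induction_on with
  | _ n ih =>
    intro ω hlen hred hcomm
    cases ω with
    | nil =>
      intro k hk
      simp at hk
    | cons c ω₁ =>
      have hred₁ : cs.IsReduced ω₁ := by
        have := hred.drop (j := 1)
        simpa using this
      have hlen₁ : ω₁.length + 1 = n := by simpa using hlen
      by_cases hcomm_c : cs.simple c * cs.simple i = cs.simple i * cs.simple c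
      · have hcomm₁ : cs.simple i * cs.wordProd ω₁ = cs.wordProd ω₁ * cs.simple i := by
        
        
          have h1 : cs.simple i * (cs.simple c * cs.wordProd ω₁)
              = (cs.simple c * cs.wordProd ω₁) * cs.simple i := by
            rw [← cs.wordProd_cons]
            exact hcomm
          have h2 : cs.simple c * (cs.simple i * cs.wordProd ω₁)
              = cs.simple c * (cs.wordProd ω₁ * cs.simple i) := by
            calc cs.simple c * (cs.simple i * cs.wordProd ω₁)
                = (cs.simple c * cs.simple i) * cs.wordProd ω₁ := by group
              _ = (cs.simple i * cs.simple c) * cs.wordProd ω₁ := by rw [hcomm_c]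
              _ = cs.simple i * (cs.simple c * cs.wordProd ω₁) := by group
              _ = (cs.simple c * cs.wordProd ω₁) * cs.simple i := h1
              _ = cs.simple c * (cs.wordProd ω₁ * cs.simple i) := by group
          exact mul_left_cancel h2
        intro k hk
        rcases List.mem_cons.mp hk with hk | hk
        · rw [hk]
          exact hcomm_c
        · exact ih ω₁.length (by omega) ω₁ rfl hred₁ hcomm₁ k hk
      · exfalso
        have hkni : c ≠ i := by
          rintro rfl
          exact hcomm_c rfl
        have h0 : M.M i c = 0 := by
          rcases hra i c (fun h => hkni h.symm) with h2 | h2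
          · exact absurd (comm_of_two cs h2).symm hcomm_c
          · exact h2
        have hlc : cs.length (cs.wordProd (c :: ω₁)) = n := by
          have := hred
          unfold CoxeterSystem.IsReduced at this
          omega
        have hl₁ : cs.length (cs.wordProd ω₁) = ω₁.length := hred₁
        have hscv : cs.simple c * cs.wordProd (c :: ω₁) = cs.wordProd ω₁ := by
          rw [cs.wordProd_cons, ← mul_assoc, cs.simple_mul_simple_self, one_mul]
        rcases cs.length_simple_mul (cs.wordProd (c :: ω₁)) i with hup | hdown
        · -- ascent : dihedral contradiction
          have hiu : cs.length (cs.simple i * (cs.simple i * cs.wordProd (c :: ω₁)))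
              < cs.length (cs.simple i * cs.wordProd (c :: ω₁)) := by
            rw [← mul_assoc, cs.simple_mul_simple_self, one_mul, hup]
            omega
          have hau : cs.length (cs.simple c * (cs.simple i * cs.wordProd (c :: ω₁)))
              < cs.length (cs.simple i * cs.wordProd (c :: ω₁)) := by
            have h1 : cs.simple c * (cs.simple i * cs.wordProd (c :: ω₁))
                = (cs.wordProd ω₁) * cs.simple i := by
              rw [hcomm, ← mul_assoc, hscv]
            rw [h1, hup]
            have h2 : cs.length (cs.wordProd ω₁ * cs.simple i)
                ≤ cs.length (cs.wordProd ω₁) + 1 := by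
              have := cs.length_mul_le (cs.wordProd ω₁) (cs.simple i)
              rw [cs.length_simple] at this
              exact this
            omega
          exact dih0 cs hra (fun h => hkni h.symm) h0
            (cs.simple i * cs.wordProd (c :: ω₁)) hiu hau
        · -- descent : exchange
          have hinv : cs.IsLeftInversion (cs.wordProd (c :: ω₁)) (cs.simple i) :=
            ⟨cs.isReflection_simple i, by omega⟩
          have hmem := mem_leftInvSeq_of_isLeftInversion cs hinv
          obtain ⟨l, hl, hget⟩ := List.mem_iff_getElem.mp hmem
          have hl' : l < (c :: ω₁).length := by
            rw [← cs.length_leftInvSeq]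
            exact hl
          have hgetD : (cs.leftInvSeq (c :: ω₁)).getD l 1 = cs.simple i := by
            rw [List.getD_eq_getElem _ _ hl, hget]
          have hformula := cs.getD_leftInvSeq (c :: ω₁) l
          rw [hgetD] at hformula
          have hget? : (c :: ω₁)[l]? = some ((c :: ω₁).get ⟨l, hl'⟩) := List.getElem?_eq_getElem hl'
          rw [hget?] at hformula
          simp only [Option.map_some, Option.getD_some] at hformula
          have hidx : (c :: ω₁).get ⟨l, hl'⟩ = i := idx cs hra hformula.symm
          by_cases hl0 : l = 0
          · apply hkni
            have hhead : (c :: ω₁).get ⟨l, hl'⟩ = c := by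
              subst hl0
              rfl
            rw [← hhead, hidx]
          · rw [hidx] at hformula
            have hpcomm : cs.simple i * cs.wordProd ((c :: ω₁).take l)
                = cs.wordProd ((c :: ω₁).take l) * cs.simple i := by
              calc cs.simple i * cs.wordProd ((c :: ω₁).take l)
                  = (cs.wordProd ((c :: ω₁).take l) * cs.simple i *
                      (cs.wordProd ((c :: ω₁).take l))⁻¹) *
                    cs.wordProd ((c :: ω₁).take l) := by rw [← hformula]
                _ = cs.wordProd ((c :: ω₁).take l) * cs.simple i := by group
            have htq : cs.IsReduced ((c :: ω₁).take l) := hred.take l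
            have hlentake : ((c :: ω₁).take l).length = l := by
              rw [List.length_take]
              omega
            have hall := ih l (by omega) ((c :: ω₁).take l) hlentake htq hpcomm
            apply hcomm_c
            apply hall c
            obtain ⟨l₁, rfl⟩ : ∃ l₁, l = l₁ + 1 := ⟨l - 1, by omega⟩
            rw [List.take_succ_cons]
            exact List.mem_cons_self

end RACC

/-- In a right-angled Coxeter system, if `u * s * v * t * w = u * v * w` arises from a
reduced-expression cancellation, i.e. `v⁻¹ * s * v = t`, then `s = t` and every generator
appearing in any reduced expression of `v` commutes with `s`. -/
theorem right_angled_cancellation_commutes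
    {B W : Type*} [Group W] (M : CoxeterMatrix B) (cs : CoxeterSystem M W)
    (rightAngled : ∀ i j : B, i ≠ j → M i j = 2 ∨ M i j = 0)
    (u v w : W) (i j : B)
    (heq : u * cs.simple i * v * cs.simple j * w = u * v * w)
    (hconj : v⁻¹ * cs.simple i * v = cs.simple j) :
    cs.simple i = cs.simple j ∧
    ∀ ω : List B, cs.IsReduced ω → cs.wordProd ω = v →
      ∀ k ∈ ω, cs.simple k * cs.simple i = cs.simple i * cs.simple k := by
  have hij : i = j := by
    apply RACC.idx cs rightAngled (w := v⁻¹)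
    rw [inv_inv]
    exact hconj
  subst hij
  refine ⟨rfl, ?_⟩
  intro ω hred hπ k hk
  have hcomm : cs.simple i * v = v * cs.simple i := by
    calc cs.simple i * v = v * (v⁻¹ * cs.simple i * v) := by group
      _ = v * cs.simple i := by rw [hconj]
  rw [← hπ] at hcomm
  exact RACC.comm_letters cs rightAngled i ω.length ω rfl hred hcomm k hk
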